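/- Let d ≥ 1, l ≥ 1, t = l·d, let W₀ ∈ ℝ^{d×d} be symmetric positive definite, let θ* ∈ ℝ^d and η ∈ ℝ^t, and let X ∈ ℝ^{t×d} satisfy XᵀX = l·I_d. With W = W₀ + XᵀX = W₀ + l·I_d, Y = Xθ* + η, and θ̂ = W⁻¹XᵀY, one has ‖θ̂ − θ*‖₂² ≤ (1/l²)·θ*ᵀW₀²θ* + (1/l²)·ηᵀXXᵀη + (2·λmax(W₀)·‖θ*‖₂/l²)·√(ηᵀXXᵀη), where λmax(W₀) is the largest eigenvalue of W₀. -/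

import Mathlib

open Matrix

private lemma dot_eq_inner_aux {d : ℕ} (u v : Fin d → ℝ) :
    u ⬝ᵥ v = inner (𝕜 := ℝ) ((WithLp.equiv 2 (Fin d → ℝ)).symm u)
      ((WithLp.equiv 2 (Fin d → ℝ)).symm v) := by
  simp [dotProduct, PiLp.inner_apply, RCLike.inner_apply]
  exact Finset.sum_congr rfl fun _ _ => mul_comm _ _

private lemma spec_norm_bound {d : ℕ} (hd : 1 ≤ d) {A : Matrix (Fin d) (Fin d) ℝ}
    (hA : A.PosDef) (x : Fin d → ℝ) :
    (A *ᵥ x) ⬝ᵥ (A *ᵥ x) ≤ (⨆ i, hA.1.eigenvalues i) ^ 2 * (x ⬝ᵥ x) := by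
  have hne : Nonempty (Fin d) := ⟨⟨0, hd⟩⟩
  set b := hA.1.eigenvectorBasis with hb
  set μ := ⨆ i, hA.1.eigenvalues i with hμdef
  have hle : ∀ i, hA.1.eigenvalues i ≤ μ :=
    fun i => le_ciSup (Set.Finite.bddAbove (Set.finite_range _)) i
  have hpos : ∀ i, 0 < hA.1.eigenvalues i := hA.eigenvalues_pos
  have hμ : 0 ≤ μ := le_trans (hpos (Classical.arbitrary _)).le (hle _)
  have hsym : Aᵀ = A := by
    rw [← Matrix.conjTranspose_eq_transpose_of_trivial]; exact hA.1
  have key2 : ∀ u v : EuclideanSpace ℝ (Fin d),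
      inner (𝕜 := ℝ) u v = ∑ i, (b.repr u i) * (b.repr v i) := by
    intro u v
    rw [← b.repr.inner_map_map u v, PiLp.inner_apply]
    simp only [RCLike.inner_apply, conj_trivial]
    exact Finset.sum_congr rfl fun _ _ => mul_comm _ _
  set x' : EuclideanSpace ℝ (Fin d) := (WithLp.equiv 2 (Fin d → ℝ)).symm x with hx'
  set y' : EuclideanSpace ℝ (Fin d) := (WithLp.equiv 2 (Fin d → ℝ)).symm (A *ᵥ x) with hy'
  have hrep : ∀ i, b.repr y' i = hA.1.eigenvalues i * b.repr x' i := by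
    intro i
    rw [b.repr_apply_apply, b.repr_apply_apply]
    have h1 : inner (𝕜 := ℝ) (b i) y' = (WithLp.equiv 2 (Fin d → ℝ) (b i)) ⬝ᵥ (A *ᵥ x) := by
      rw [dot_eq_inner_aux]; rfl
    have h2 : inner (𝕜 := ℝ) (b i) x' = (WithLp.equiv 2 (Fin d → ℝ) (b i)) ⬝ᵥ x := by
      rw [dot_eq_inner_aux]; rfl
    rw [h1, h2, dotProduct_mulVec, ← mulVec_transpose, hsym,
      WithLp.equiv_apply, hA.1.mulVec_eigenvectorBasis, smul_dotProduct, smul_eq_mul]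
  have hAx : (A *ᵥ x) ⬝ᵥ (A *ᵥ x)
      = ∑ i, (hA.1.eigenvalues i * b.repr x' i) * (hA.1.eigenvalues i * b.repr x' i) := by
    rw [dot_eq_inner_aux, key2]
    exact Finset.sum_congr rfl fun i _ => by rw [← hy', hrep]
  have hxx : x ⬝ᵥ x = ∑ i, (b.repr x' i) * (b.repr x' i) := by
    rw [dot_eq_inner_aux, key2]
  rw [hAx, hxx, Finset.mul_sum]
  refine Finset.sum_le_sum fun i _ => ?_
  have h3 : (hA.1.eigenvalues i * b.repr x' i) * (hA.1.eigenvalues i * b.repr x' i)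
      = (hA.1.eigenvalues i) ^ 2 * ((b.repr x' i) * (b.repr x' i)) := by ring
  rw [h3]
  exact mul_le_mul_of_nonneg_right (pow_le_pow_left₀ (hpos i).le (hle i) 2)
    (mul_self_nonneg _)

private lemma dot_self_nonneg {d : ℕ} (u : Fin d → ℝ) : 0 ≤ u ⬝ᵥ u :=
  Finset.sum_nonneg fun i _ => mul_self_nonneg (u i)

/-- Deterministic error bound for the regularized least-squares
estimator when the design matrix satisfies `XᵀX = l·I` (l stacked orthonormal bases). -/
theorem stmt_15 {d l : ℕ} (hd : 1 ≤ d) (hl : 1 ≤ l)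
    (W0 : Matrix (Fin d) (Fin d) ℝ) (hW0 : W0.PosDef)
    (θstar : Fin d → ℝ) (η : Fin (l * d) → ℝ)
    (X : Matrix (Fin (l * d)) (Fin d) ℝ)
    (hXX : Xᵀ * X = (l : ℝ) • (1 : Matrix (Fin d) (Fin d) ℝ))
    (W : Matrix (Fin d) (Fin d) ℝ) (hW : W = W0 + Xᵀ * X)
    (Y : Fin (l * d) → ℝ) (hY : Y = X *ᵥ θstar + η)
    (θhat : Fin d → ℝ) (hθhat : θhat = W⁻¹ *ᵥ (Xᵀ *ᵥ Y)) :
    (θhat - θstar) ⬝ᵥ (θhat - θstar)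
      ≤ (1 / (l : ℝ) ^ 2) * (θstar ⬝ᵥ ((W0 * W0) *ᵥ θstar))
        + (1 / (l : ℝ) ^ 2) * (η ⬝ᵥ ((X * Xᵀ) *ᵥ η))
        + (2 * (⨆ i, hW0.1.eigenvalues i) * Real.sqrt (θstar ⬝ᵥ θstar) / (l : ℝ) ^ 2)
          * Real.sqrt (η ⬝ᵥ ((X * Xᵀ) *ᵥ η)) := by
  have hne : Nonempty (Fin d) := ⟨⟨0, hd⟩⟩
  have hlpos : (0 : ℝ) < (l : ℝ) := by exact_mod_cast hl
  have hsym : W0ᵀ = W0 := by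
    rw [← Matrix.conjTranspose_eq_transpose_of_trivial]; exact hW0.1
  have hXXsemi : (Xᵀ * X).PosSemidef := by
    have := Matrix.posSemidef_conjTranspose_mul_self X
    rwa [Matrix.conjTranspose_eq_transpose_of_trivial] at this
  have hWpd : W.PosDef := hW ▸ hW0.add_posSemidef hXXsemi
  have hWunit : IsUnit W.det := hWpd.det_pos.ne'.isUnit
  -- error representation
  set e : Fin d → ℝ := θhat - θstar with he
  set v : Fin d → ℝ := Xᵀ *ᵥ η - W0 *ᵥ θstar with hv
  have hXtY : Xᵀ *ᵥ Y = W *ᵥ θstar + v := by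
    rw [hY, Matrix.mulVec_add, Matrix.mulVec_mulVec, hW, hv, hXX]
    simp only [Matrix.add_mulVec, Matrix.smul_mulVec, Matrix.one_mulVec]
    abel
  have heq : e = W⁻¹ *ᵥ v := by
    rw [he, hθhat, hXtY, Matrix.mulVec_add, Matrix.mulVec_mulVec,
      Matrix.nonsing_inv_mul W hWunit, Matrix.one_mulVec]
    abel
  have hWe : W *ᵥ e = v := by
    rw [heq, Matrix.mulVec_mulVec, Matrix.mul_nonsing_inv W hWunit, Matrix.one_mulVec]
  -- step A : e⬝e ≤ (1/l²) v⬝v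
  have hWe' : W *ᵥ e = W0 *ᵥ e + (l : ℝ) • e := by
    rw [hW, hXX, Matrix.add_mulVec]
    simp only [Matrix.smul_mulVec, Matrix.one_mulVec]
  have hexp : v ⬝ᵥ v = (W0 *ᵥ e) ⬝ᵥ (W0 *ᵥ e) + 2 * (l : ℝ) * (e ⬝ᵥ (W0 *ᵥ e))
      + (l : ℝ) ^ 2 * (e ⬝ᵥ e) := by
    rw [← hWe, hWe']
    simp only [add_dotProduct, dotProduct_add, smul_dotProduct,
      dotProduct_smul, smul_eq_mul]
    rw [dotProduct_comm (W0 *ᵥ e) e]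
    ring
  have hW0e : 0 ≤ e ⬝ᵥ (W0 *ᵥ e) := by
    have := hW0.posSemidef.dotProduct_mulVec_nonneg e
    simpa using this
  have hA : e ⬝ᵥ e ≤ (1 / (l : ℝ) ^ 2) * (v ⬝ᵥ v) := by
    have hl2 : (0:ℝ) < (l : ℝ) ^ 2 := by positivity
    have h1 : (l : ℝ) ^ 2 * (e ⬝ᵥ e) ≤ v ⬝ᵥ v := by
      rw [hexp]
      nlinarith [dot_self_nonneg (W0 *ᵥ e), hW0e, hlpos]
    calc e ⬝ᵥ e = (1 / (l : ℝ) ^ 2) * ((l : ℝ) ^ 2 * (e ⬝ᵥ e)) := by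
          field_simp
      _ ≤ (1 / (l : ℝ) ^ 2) * (v ⬝ᵥ v) :=
          mul_le_mul_of_nonneg_left h1 (by positivity)
  -- identity B
  set a : Fin d → ℝ := W0 *ᵥ θstar with ha
  set c : Fin d → ℝ := Xᵀ *ᵥ η with hc
  have hBv : v ⬝ᵥ v = a ⬝ᵥ a + c ⬝ᵥ c - 2 * (a ⬝ᵥ c) := by
    rw [hv]
    simp only [sub_dotProduct, dotProduct_sub]
    rw [dotProduct_comm c a]
    ring
  have hW0sq : θstar ⬝ᵥ ((W0 * W0) *ᵥ θstar) = a ⬝ᵥ a := by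
    rw [← Matrix.mulVec_mulVec, Matrix.dotProduct_mulVec, ← Matrix.mulVec_transpose, hsym]
  have hXXd : η ⬝ᵥ ((X * Xᵀ) *ᵥ η) = c ⬝ᵥ c := by
    rw [← Matrix.mulVec_mulVec, Matrix.dotProduct_mulVec, ← Matrix.mulVec_transpose, hc]
  -- Cauchy-Schwarz on the cross term
  have hCS : -(a ⬝ᵥ c) ≤ Real.sqrt (a ⬝ᵥ a) * Real.sqrt (c ⬝ᵥ c) := by
    calc -(a ⬝ᵥ c) = (-a) ⬝ᵥ c := (neg_dotProduct a c).symm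
      _ = ∑ i, (fun i => -(a i)) i * c i := rfl
      _ ≤ Real.sqrt (∑ i, ((fun i => -(a i)) i) ^ 2) * Real.sqrt (∑ i, c i ^ 2) :=
          Real.sum_mul_le_sqrt_mul_sqrt _ _ _
      _ = Real.sqrt (a ⬝ᵥ a) * Real.sqrt (c ⬝ᵥ c) := by
          simp [dotProduct, pow_two]
  -- spectral bound
  set μ := ⨆ i, hW0.1.eigenvalues i with hμ
  have hμ0 : 0 ≤ μ := le_trans (hW0.eigenvalues_pos (Classical.arbitrary _)).le
    (le_ciSup (Set.Finite.bddAbove (Set.finite_range _)) _)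
  have hspec : Real.sqrt (a ⬝ᵥ a) ≤ μ * Real.sqrt (θstar ⬝ᵥ θstar) := by
    have h1 := spec_norm_bound hd hW0 θstar
    calc Real.sqrt (a ⬝ᵥ a) ≤ Real.sqrt (μ ^ 2 * (θstar ⬝ᵥ θstar)) :=
          Real.sqrt_le_sqrt (by rw [ha]; exact h1)
      _ = μ * Real.sqrt (θstar ⬝ᵥ θstar) := by
          rw [Real.sqrt_mul (sq_nonneg _), Real.sqrt_sq hμ0]
  have hcross : -(a ⬝ᵥ c) ≤ μ * Real.sqrt (θstar ⬝ᵥ θstar) * Real.sqrt (c ⬝ᵥ c) :=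
    le_trans hCS (mul_le_mul_of_nonneg_right hspec (Real.sqrt_nonneg _))
  -- combine
  have hl2 : (0:ℝ) < (l : ℝ) ^ 2 := by positivity
  calc e ⬝ᵥ e ≤ (1 / (l : ℝ) ^ 2) * (v ⬝ᵥ v) := hA
    _ = (1 / (l : ℝ) ^ 2) * (a ⬝ᵥ a) + (1 / (l : ℝ) ^ 2) * (c ⬝ᵥ c)
        + (2 / (l : ℝ) ^ 2) * (-(a ⬝ᵥ c)) := by rw [hBv]; ring
    _ ≤ (1 / (l : ℝ) ^ 2) * (a ⬝ᵥ a) + (1 / (l : ℝ) ^ 2) * (c ⬝ᵥ c)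
        + (2 / (l : ℝ) ^ 2) * (μ * Real.sqrt (θstar ⬝ᵥ θstar) * Real.sqrt (c ⬝ᵥ c)) := by
          gcongr
    _ = (1 / (l : ℝ) ^ 2) * (θstar ⬝ᵥ ((W0 * W0) *ᵥ θstar))
        + (1 / (l : ℝ) ^ 2) * (η ⬝ᵥ ((X * Xᵀ) *ᵥ η))
        + (2 * μ * Real.sqrt (θstar ⬝ᵥ θstar) / (l : ℝ) ^ 2)
          * Real.sqrt (η ⬝ᵥ ((X * Xᵀ) *ᵥ η)) := by
          rw [hW0sq, hXXd]; ring
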